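/- arXiv:1410.4736 — 5 statements merged into one kernel-verified Lean document; each statement's English description precedes it below -/
import Mathlib

section
/- Let d, D, M > 0. Define c_max = 2√(d M) if D ≤ 2d, and c_max = √(D² M /(D - d)) if D ≥ 2d. Then for every c > c_max there exists r > 0 with -D r² + c r ≥ 0 and -d r² + c r ≥ M. Conversely, if c < c_max no such r exists. -/
theorem cmax_characterization (d D M : ℝ) (hd : 0 < d) (hD : 0 < D) (hM : 0 < M) :
    (∀ c : ℝ,
        c > (if D ≤ 2 * d then 2 * Real.sqrt (d * M) else Real.sqrt (D ^ 2 * M / (D - d))) →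
        ∃ r : ℝ, 0 < r ∧ -D * r ^ 2 + c * r ≥ 0 ∧ -d * r ^ 2 + c * r ≥ M) ∧
    (∀ c : ℝ,
        c < (if D ≤ 2 * d then 2 * Real.sqrt (d * M) else Real.sqrt (D ^ 2 * M / (D - d))) →
        ¬ ∃ r : ℝ, 0 < r ∧ -D * r ^ 2 + c * r ≥ 0 ∧ -d * r ^ 2 + c * r ≥ M) := by
  have hdM : 0 ≤ d * M := by positivity
  have hs := Real.sq_sqrt hdM
  have hsn := Real.sqrt_nonneg (d * M)
  constructor
  · intro c hc
    split_ifs at hc with h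
    · -- D ≤ 2d : take r = c/(2d)
      have hc0 : 0 < c := lt_of_le_of_lt (by positivity) hc
      have hc2 : 4 * (d * M) < c ^ 2 := by nlinarith
      refine ⟨c / (2 * d), by positivity, ?_, ?_⟩
      · have e1 : -D * (c / (2 * d)) ^ 2 + c * (c / (2 * d))
            = c ^ 2 * (2 * d - D) / (4 * d ^ 2) := by field_simp; ring
        rw [e1]
        have : 0 ≤ c ^ 2 * (2 * d - D) := by nlinarith [sq_nonneg c]
        positivity
      · have e2 : -d * (c / (2 * d)) ^ 2 + c * (c / (2 * d)) = c ^ 2 / (4 * d) := by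
          field_simp; ring
        rw [e2, ge_iff_le, le_div_iff₀ (by positivity)]
        nlinarith
    · -- 2d < D : take r = c/D
      have hDd : 0 < D - d := by nlinarith [not_le.mp h]
      have hX : 0 ≤ D ^ 2 * M / (D - d) := by positivity
      have hc0 : 0 < c := lt_of_le_of_lt (Real.sqrt_nonneg _) hc
      have hc2 : D ^ 2 * M / (D - d) < c ^ 2 := by
        nlinarith [Real.sq_sqrt hX, Real.sqrt_nonneg (D ^ 2 * M / (D - d))]
      have hc2' : D ^ 2 * M < c ^ 2 * (D - d) := by
        rw [div_lt_iff₀ hDd] at hc2; linarith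
      refine ⟨c / D, by positivity, ?_, ?_⟩
      · have e1 : -D * (c / D) ^ 2 + c * (c / D) = 0 := by field_simp; ring
        rw [e1]
      · have e2 : -d * (c / D) ^ 2 + c * (c / D) = c ^ 2 * (D - d) / D ^ 2 := by
          field_simp; ring
        rw [e2, ge_iff_le, le_div_iff₀ (by positivity)]
        nlinarith
  · intro c hc ⟨r, hr, h1, h2⟩
    have hc0 : 0 < c := by nlinarith
    split_ifs at hc with h
    · have hc2 : c ^ 2 < 4 * (d * M) := by nlinarith
      nlinarith [sq_nonneg (c - 2 * d * r)]
    · have hDd : 0 < D - d := by nlinarith [not_le.mp h]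
      have hX : 0 ≤ D ^ 2 * M / (D - d) := by positivity
      have hc2 : c ^ 2 < D ^ 2 * M / (D - d) :=
        (Real.lt_sqrt hc0.le).mp hc
      have hc2' : c ^ 2 * (D - d) < D ^ 2 * M := by
        rw [lt_div_iff₀ hDd] at hc2; linarith
      have hDr : D * r ≤ c := by nlinarith
      have h2d : 2 * d < D := not_le.mp h
      have hfac : 0 ≤ D * c - d * c - d * D * r := by nlinarith
      nlinarith [mul_nonneg (sub_nonneg.mpr hDr) hfac]
end

section
/- Let d, D, c, L, s, μ > 0 and f'(1) < 0. With β(γ) = √(-f'(1)/(2d) - γ(γ + c/d)) defined for 0 ≤ γ ≤ γ_lim = (√(c² - 2df'(1)) - c)/(2d), the equation s(Dγ² + cγ) = d β(γ) tanh(β(γ) L) has a solution γ with 0 < γ < γ_lim. -/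
theorem wentzell_decay_rate_exists (d D c L s μ f1 : ℝ) (hd : 0 < d) (hD : 0 < D)
    (hc : 0 < c) (hL : 0 < L) (hs : 0 < s) (hμ : 0 < μ) (hf1 : f1 < 0) :
    let γlim := (Real.sqrt (c ^ 2 - 2 * d * f1) - c) / (2 * d)
    let β := fun γ : ℝ => Real.sqrt (-f1 / (2 * d) - γ * (γ + c / d))
    ∃ γ : ℝ, 0 < γ ∧ γ < γlim ∧
      s * (D * γ ^ 2 + c * γ) = d * β γ * Real.tanh (β γ * L) := by
  intro γlim β
  set r := Real.sqrt (c ^ 2 - 2 * d * f1) with hr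
  have hr2 : r ^ 2 = c ^ 2 - 2 * d * f1 := by
    rw [hr, Real.sq_sqrt]; nlinarith
  have hrc : c < r := by
    have h : c = Real.sqrt (c ^ 2) := by rw [Real.sqrt_sq hc.le]
    rw [h, hr]
    exact Real.sqrt_lt_sqrt (by positivity) (by nlinarith)
  have hγlim : 0 < γlim := by
    show 0 < (r - c) / (2 * d)
    have : 0 < r - c := by linarith
    positivity
  -- g is the difference
  set g : ℝ → ℝ := fun γ => s * (D * γ ^ 2 + c * γ) - d * β γ * Real.tanh (β γ * L)
    with hg
  have hcontβ : Continuous β := by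
    apply Real.continuous_sqrt.comp
    continuity
  have hcontg : Continuous g := by
    apply Continuous.sub (by continuity)
    have htanh : Continuous Real.tanh := by
      have h : Real.tanh = fun x => Real.sinh x / Real.cosh x :=
        funext fun x => Real.tanh_eq_sinh_div_cosh x
      rw [h]
      exact Real.continuous_sinh.div Real.continuous_cosh fun x => (Real.cosh_pos x).ne'
    exact (continuous_const.mul hcontβ).mul (htanh.comp (hcontβ.mul continuous_const))
  have hβ0 : 0 < β 0 := by
    show (0:ℝ) < Real.sqrt _
    apply Real.sqrt_pos.mpr
    have : 0 < -f1 / (2 * d) := div_pos (by linarith) (by positivity)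
    simpa using this
  have hg0 : g 0 < 0 := by
    have htanh : 0 < Real.tanh (β 0 * L) := by
      rw [Real.tanh_eq_sinh_div_cosh]
      apply div_pos _ (Real.cosh_pos _)
      exact Real.sinh_pos_iff.mpr (by positivity)
    have : 0 < d * β 0 * Real.tanh (β 0 * L) := by positivity
    simp only [hg]
    nlinarith
  have hβlim : β γlim = 0 := by
    show Real.sqrt _ = 0
    have harg : -f1 / (2 * d) - γlim * (γlim + c / d) = 0 := by
      show -f1 / (2 * d) - (r - c) / (2 * d) * ((r - c) / (2 * d) + c / d) = 0
      field_simp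
      linear_combination (-1) * hr2
    rw [harg, Real.sqrt_zero]
  have hglim : 0 < g γlim := by
    simp only [hg, hβlim]
    simp
    nlinarith [mul_pos hc hγlim, mul_pos hD (pow_pos hγlim 2), hs]
  have := intermediate_value_Ioo (le_of_lt hγlim) hcontg.continuousOn
  have h0 : (0:ℝ) ∈ Set.Ioo (g 0) (g γlim) := ⟨hg0, hglim⟩
  obtain ⟨γ, hγmem, hγeq⟩ := this h0
  exact ⟨γ, hγmem.1, hγmem.2, by simpa [hg, sub_eq_zero] using hγeq⟩
end

section
/- Let d, D, c, L, μ > 0 and f'(1) < 0, and β(γ) = √(-f'(1)/(2d) - γ(γ + c/d)) for 0 ≤ γ ≤ γ_lim = (√(c² - 2df'(1)) - c)/(2d). Then the equation D γ² + c γ = μ d β(γ) / (1 + tanh(β(γ) L)) has a solution γ with 0 < γ < γ_lim. -/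
lemma continuous_tanh' : Continuous Real.tanh := by
  have h : Real.tanh = fun x => Real.sinh x / Real.cosh x :=
    funext Real.tanh_eq_sinh_div_cosh
  rw [h]
  exact Real.continuous_sinh.div Real.continuous_cosh fun x => (Real.cosh_pos x).ne'

lemma tanh_nonneg' {x : ℝ} (hx : 0 ≤ x) : 0 ≤ Real.tanh x := by
  rw [Real.tanh_eq_sinh_div_cosh]
  exact div_nonneg (by rwa [Real.sinh_nonneg_iff]) (Real.cosh_pos x).le

theorem system_decay_rate_exists (d D c L μ f1 : ℝ) (hd : 0 < d) (hD : 0 < D)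
    (hc : 0 < c) (hL : 0 < L) (hμ : 0 < μ) (hf1 : f1 < 0) :
    let γlim := (Real.sqrt (c ^ 2 - 2 * d * f1) - c) / (2 * d)
    let β := fun γ : ℝ => Real.sqrt (-f1 / (2 * d) - γ * (γ + c / d))
    ∃ γ : ℝ, 0 < γ ∧ γ < γlim ∧
      D * γ ^ 2 + c * γ = μ * d * β γ / (1 + Real.tanh (β γ * L)) := by
  intro γlim β
  set s := Real.sqrt (c ^ 2 - 2 * d * f1) with hs
  have hdisc : (0:ℝ) ≤ c ^ 2 - 2 * d * f1 := by nlinarith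
  have hs2 : s ^ 2 = c ^ 2 - 2 * d * f1 := Real.sq_sqrt hdisc
  have hsc : c < s := by
    have hc2 : (0:ℝ) ≤ c ^ 2 := sq_nonneg c
    have : Real.sqrt (c ^ 2) < s := by
      apply Real.sqrt_lt_sqrt hc2; nlinarith
    rwa [Real.sqrt_sq hc.le] at this
  have hγlim : 0 < γlim := by
    show 0 < (s - c) / (2 * d)
    exact div_pos (by linarith) (by positivity)
  -- β at γlim is zero
  have hβlim : β γlim = 0 := by
    show Real.sqrt _ = 0
    have hγval : γlim = (s - c) / (2 * d) := rfl
    rw [Real.sqrt_eq_zero', hγval]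
    show -f1 / (2 * d) - (s - c) / (2 * d) * ((s - c) / (2 * d) + c / d) ≤ 0
    have hz : -f1 / (2 * d) - (s - c) / (2 * d) * ((s - c) / (2 * d) + c / d) = 0 := by
      have hd' : d ≠ 0 := hd.ne'
      field_simp
      linear_combination (-1) * hs2
    linarith
  -- β at 0 is positive
  have hβ0 : 0 < β 0 := by
    show 0 < Real.sqrt _
    apply Real.sqrt_pos.mpr
    have : -f1 / (2 * d) - 0 * (0 + c / d) = -f1 / (2*d) := by ring
    rw [this]
    have hnf : 0 < -f1 := by linarith
    positivity
  -- the function g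
  set g : ℝ → ℝ := fun γ => D * γ ^ 2 + c * γ - μ * d * β γ / (1 + Real.tanh (β γ * L))
    with hg
  have hden : ∀ γ, (0:ℝ) < 1 + Real.tanh (β γ * L) := by
    intro γ
    have h1 : (0:ℝ) ≤ β γ * L := mul_nonneg (Real.sqrt_nonneg _) hL.le
    have := tanh_nonneg' h1
    linarith
  have hβcont : Continuous β := by
    apply Real.continuous_sqrt.comp
    continuity
  have hgcont : Continuous g := by
    apply Continuous.sub (by continuity)
    apply Continuous.div (by continuity)
    · exact continuous_const.add (continuous_tanh'.comp (hβcont.mul continuous_const))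
    · intro γ; exact (hden γ).ne'
  have hg0 : g 0 < 0 := by
    have : 0 < μ * d * β 0 / (1 + Real.tanh (β 0 * L)) :=
      div_pos (by positivity) (hden 0)
    simp only [hg]
    nlinarith
  have hg1 : 0 < g γlim := by
    simp only [hg, hβlim]
    have : μ * d * 0 / (1 + Real.tanh (0 * L)) = 0 := by simp
    rw [this]
    nlinarith
  have := intermediate_value_Ioo hγlim.le hgcont.continuousOn
  have hmem : (0:ℝ) ∈ Set.Ioo (g 0) (g γlim) := ⟨hg0, hg1⟩
  obtain ⟨γ, hγ, hgγ⟩ := this hmem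
  refine ⟨γ, hγ.1, hγ.2, ?_⟩
  have : D * γ ^ 2 + c * γ - μ * d * β γ / (1 + Real.tanh (β γ * L)) = 0 := hgγ
  linarith
end

section
/- For y ∈ [-L, 0), the function ξ ↦ cosh(√(ξ²+1)(y+L)) / [d√(ξ²+1) sinh(√(ξ²+1) L) + ((D/μ)ξ² + (c₀/μ)iξ) cosh(√(ξ²+1) L)] is a Schwartz function of ξ ∈ ℝ (smooth with all derivatives rapidly decreasing). -/
open Real Complex
open scoped ContDiff

namespace WentzellAux

noncomputable def bb (ξ : ℝ) : ℝ := Real.sqrt (ξ^2+1)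

lemma sq_add_one_pos (ξ : ℝ) : (0:ℝ) < ξ^2+1 := by positivity

lemma bb_sq (ξ : ℝ) : bb ξ ^ 2 = ξ^2+1 := Real.sq_sqrt (sq_add_one_pos ξ).le

lemma bb_pos (ξ : ℝ) : 0 < bb ξ := Real.sqrt_pos.2 (sq_add_one_pos ξ)

lemma one_le_bb (ξ : ℝ) : 1 ≤ bb ξ := by
  rw [show (1:ℝ) = Real.sqrt 1 by simp [Real.sqrt_one]]
  exact Real.sqrt_le_sqrt (by nlinarith)

lemma bb_ne (ξ : ℝ) : bb ξ ≠ 0 := (bb_pos ξ).ne'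

lemma abs_le_bb (ξ : ℝ) : |ξ| ≤ bb ξ := by
  rw [show |ξ| = Real.sqrt (ξ^2) by rw [Real.sqrt_sq_eq_abs]]
  exact Real.sqrt_le_sqrt (by nlinarith)

lemma bb_le (ξ : ℝ) : bb ξ ≤ 1 + |ξ| := by
  nlinarith [bb_sq ξ, bb_pos ξ, abs_nonneg ξ, _root_.sq_abs ξ, one_le_bb ξ]

lemma contDiff_bb : ContDiff ℝ ∞ bb := by
  have : ContDiff ℝ ∞ (fun ξ : ℝ => ξ^2+1) := by fun_prop
  exact this.sqrt (fun ξ => (sq_add_one_pos ξ).ne')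

lemma hasDerivAt_bb (ξ : ℝ) : HasDerivAt bb (ξ / bb ξ) ξ := by
  have h1 : HasDerivAt (fun ξ : ℝ => ξ^2+1) (2*ξ) ξ := by
    simpa using ((hasDerivAt_pow 2 ξ).add_const 1)
  have : HasDerivAt bb (1 / (2 * √(ξ ^ 2 + 1)) * (2 * ξ)) ξ := (Real.hasDerivAt_sqrt (sq_add_one_pos ξ).ne').comp ξ h1
  convert this using 1
  simp only [bb]
  field_simp

lemma deriv_bb : deriv bb = fun ξ => ξ / bb ξ := funext fun ξ => (hasDerivAt_bb ξ).deriv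

lemma poly_bound (p : Polynomial ℝ) : ∃ C : ℝ, 0 ≤ C ∧ ∀ ξ : ℝ, |p.eval ξ| ≤ C * (1+|ξ|)^p.natDegree := by
  refine ⟨∑ i ∈ Finset.range (p.natDegree+1), |p.coeff i|, Finset.sum_nonneg (fun _ _ => abs_nonneg _), fun ξ => ?_⟩
  rw [Polynomial.eval_eq_sum_range]
  calc |∑ i ∈ Finset.range (p.natDegree+1), p.coeff i * ξ ^ i|
      ≤ ∑ i ∈ Finset.range (p.natDegree+1), |p.coeff i * ξ ^ i| := Finset.abs_sum_le_sum_abs _ _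
    _ ≤ ∑ i ∈ Finset.range (p.natDegree+1), |p.coeff i| * (1+|ξ|)^p.natDegree := by
        refine Finset.sum_le_sum (fun i hi => ?_)
        rw [abs_mul]
        refine mul_le_mul_of_nonneg_left ?_ (abs_nonneg _)
        calc |ξ ^ i| = |ξ|^i := by rw [_root_.abs_pow]
          _ ≤ (1+|ξ|)^i := pow_le_pow_left₀ (abs_nonneg _) (by linarith) _
          _ ≤ (1+|ξ|)^p.natDegree := pow_le_pow_right₀ (by linarith [abs_nonneg ξ]) (Nat.lt_succ_iff.mp (Finset.mem_range.mp hi))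
    _ = _ := by rw [← Finset.sum_mul]

lemma iteratedDeriv_bb_succ (n : ℕ) :
    ∃ p : Polynomial ℝ, ∀ ξ, iteratedDeriv (n+1) bb ξ = p.eval ξ / bb ξ ^ (2*n+1) := by
  induction n with
  | zero => exact ⟨Polynomial.X, fun ξ => by simp [iteratedDeriv_one, deriv_bb]⟩
  | succ n ih =>
    obtain ⟨p, hp⟩ := ih
    refine ⟨Polynomial.derivative p * (Polynomial.X^2+1) - Polynomial.C (2*(n:ℝ)+1) * p * Polynomial.X, fun ξ => ?_⟩
    rw [iteratedDeriv_succ]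
    have he : deriv (iteratedDeriv (n+1) bb) ξ
        = deriv (fun ξ => p.eval ξ / bb ξ ^ (2*n+1)) ξ := by
      congr 1; funext t; exact hp t
    rw [he]
    have h1 : HasDerivAt (fun ξ => bb ξ ^ (2*n+1))
        ((2*n+1 : ℕ) * bb ξ ^ (2*n+1-1) * (ξ / bb ξ)) ξ := (hasDerivAt_bb ξ).pow _
    have h3 := (p.hasDerivAt ξ).div h1 (pow_ne_zero _ (bb_ne ξ))
    have h3' : HasDerivAt (fun ξ => p.eval ξ / bb ξ ^ (2*n+1)) _ ξ := h3
    rw [h3'.deriv, Nat.add_sub_cancel]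
    push_cast
    have hb2 := bb_sq ξ
    have hbne := bb_ne ξ
    simp only [Polynomial.eval_sub, Polynomial.eval_mul, Polynomial.eval_add,
      Polynomial.eval_pow, Polynomial.eval_X, Polynomial.eval_C, Polynomial.eval_one]
    rw [← hb2]
    field_simp
    ring

lemma one_le_base (ξ : ℝ) : (1:ℝ) ≤ 1 + |ξ| := by linarith [abs_nonneg ξ]

def Dc (a : ℝ) (P : ℝ → ℂ) : Prop :=
  ContDiff ℝ ∞ P ∧ ∀ n : ℕ, ∃ (C : ℝ) (k : ℕ), 0 ≤ C ∧
    ∀ ξ, ‖iteratedDeriv n P ξ‖ ≤ C * (1+|ξ|)^k * Real.exp (a * bb ξ)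

lemma Dc.smooth {a P} (h : Dc a P) : ContDiff ℝ ∞ P := h.1

lemma Dc.of_le {a b : ℝ} {P} (h : Dc a P) (hab : a ≤ b) : Dc b P := by
  refine ⟨h.1, fun n => ?_⟩
  obtain ⟨C, k, hC, hb⟩ := h.2 n
  refine ⟨C, k, hC, fun ξ => (hb ξ).trans ?_⟩
  have : Real.exp (a * bb ξ) ≤ Real.exp (b * bb ξ) :=
    Real.exp_le_exp.2 (mul_le_mul_of_nonneg_right hab (bb_pos ξ).le)
  have h1 : (0:ℝ) ≤ C * (1+|ξ|)^k := by positivity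
  nlinarith [this]

lemma Dc.deriv {a P} (h : Dc a P) : Dc a (deriv P) := by
  refine ⟨(contDiff_infty_iff_deriv.1 h.1).2, fun n => ?_⟩
  obtain ⟨C, k, hC, hb⟩ := h.2 (n+1)
  exact ⟨C, k, hC, fun ξ => by rw [← iteratedDeriv_succ']; exact hb ξ⟩

lemma Dc.add {a P Q} (hP : Dc a P) (hQ : Dc a Q) : Dc a (fun ξ => P ξ + Q ξ) := by
  refine ⟨hP.1.add hQ.1, fun n => ?_⟩
  obtain ⟨C, k, hC, hb⟩ := hP.2 n
  obtain ⟨C', k', hC', hb'⟩ := hQ.2 n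
  refine ⟨C + C', max k k', by positivity, fun ξ => ?_⟩
  have he : iteratedDeriv n (fun ξ => P ξ + Q ξ) ξ = iteratedDeriv n P ξ + iteratedDeriv n Q ξ := by
    simp only [iteratedDeriv_eq_iteratedFDeriv]
    rw [show (fun ξ => P ξ + Q ξ) = P + Q from rfl,
      iteratedFDeriv_add_apply (contDiff_infty.1 hP.1 n).contDiffAt (contDiff_infty.1 hQ.1 n).contDiffAt]
    rfl
  rw [he]
  have h1 : (1+|ξ|)^k ≤ (1+|ξ|)^(max k k') := pow_le_pow_right₀ (one_le_base ξ) (le_max_left _ _)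
  have h2 : (1+|ξ|)^k' ≤ (1+|ξ|)^(max k k') := pow_le_pow_right₀ (one_le_base ξ) (le_max_right _ _)
  have hexp : (0:ℝ) < Real.exp (a * bb ξ) := Real.exp_pos _
  calc ‖iteratedDeriv n P ξ + iteratedDeriv n Q ξ‖
      ≤ ‖iteratedDeriv n P ξ‖ + ‖iteratedDeriv n Q ξ‖ := norm_add_le _ _
    _ ≤ C * (1+|ξ|)^k * Real.exp (a*bb ξ) + C' * (1+|ξ|)^k' * Real.exp (a*bb ξ) :=
        add_le_add (hb ξ) (hb' ξ)
    _ ≤ C * (1+|ξ|)^(max k k') * Real.exp (a*bb ξ) + C' * (1+|ξ|)^(max k k') * Real.exp (a*bb ξ) :=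
        add_le_add (mul_le_mul_of_nonneg_right (mul_le_mul_of_nonneg_left h1 hC) hexp.le)
          (mul_le_mul_of_nonneg_right (mul_le_mul_of_nonneg_left h2 hC') hexp.le)
    _ = (C+C') * (1+|ξ|)^(max k k') * Real.exp (a*bb ξ) := by ring

lemma Dc.uniform {a P} (h : Dc a P) (n : ℕ) : ∃ (C : ℝ) (k : ℕ), 0 ≤ C ∧
    ∀ i ≤ n, ∀ ξ, ‖iteratedDeriv i P ξ‖ ≤ C * (1+|ξ|)^k * Real.exp (a * bb ξ) := by
  induction n with
  | zero =>
    obtain ⟨C, k, hC, hb⟩ := h.2 0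
    exact ⟨C, k, hC, fun i hi ξ => by rw [Nat.le_zero.1 hi]; exact hb ξ⟩
  | succ n ih =>
    obtain ⟨C, k, hC, hb⟩ := ih
    obtain ⟨C', k', hC', hb'⟩ := h.2 (n+1)
    refine ⟨max C C', max k k', le_max_of_le_left hC, fun i hi ξ => ?_⟩
    have hexp : (0:ℝ) < Real.exp (a * bb ξ) := Real.exp_pos _
    rcases Nat.lt_succ_iff_lt_or_eq.1 (Nat.lt_succ_of_le hi) with hlt | heq
    · calc ‖iteratedDeriv i P ξ‖ ≤ C * (1+|ξ|)^k * Real.exp (a*bb ξ) :=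
            hb i (Nat.lt_succ_iff.mp hlt) ξ
        _ ≤ max C C' * (1+|ξ|)^(max k k') * Real.exp (a*bb ξ) :=
            mul_le_mul_of_nonneg_right (mul_le_mul (le_max_left _ _)
              (pow_le_pow_right₀ (one_le_base ξ) (le_max_left _ _)) (by positivity) (by positivity)) hexp.le
    · subst heq
      calc ‖iteratedDeriv (n+1) P ξ‖ ≤ C' * (1+|ξ|)^k' * Real.exp (a*bb ξ) := hb' ξ
        _ ≤ max C C' * (1+|ξ|)^(max k k') * Real.exp (a*bb ξ) :=
            mul_le_mul_of_nonneg_right (mul_le_mul (le_max_right _ _)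
              (pow_le_pow_right₀ (one_le_base ξ) (le_max_right _ _)) (by positivity) (by positivity)) hexp.le

lemma Dc.mul {a b : ℝ} {P Q} (hP : Dc a P) (hQ : Dc b Q) : Dc (a+b) (fun ξ => P ξ * Q ξ) := by
  refine ⟨hP.1.mul hQ.1, fun n => ?_⟩
  obtain ⟨C, k, hC, hb⟩ := hP.uniform n
  obtain ⟨C', k', hC', hb'⟩ := hQ.uniform n
  refine ⟨2^n * (C * C'), k + k', by positivity, fun ξ => ?_⟩
  have hexp : (0:ℝ) < Real.exp (a * bb ξ) := Real.exp_pos _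
  have key : ‖iteratedDeriv n (fun ξ => P ξ * Q ξ) ξ‖ ≤ ∑ i ∈ Finset.range (n + 1),
      (n.choose i : ℝ) * ‖iteratedDeriv i P ξ‖ * ‖iteratedDeriv (n-i) Q ξ‖ := by
    rw [← norm_iteratedFDeriv_eq_norm_iteratedDeriv]
    simp only [← norm_iteratedFDeriv_eq_norm_iteratedDeriv]
    exact norm_iteratedFDeriv_mul_le (𝕜 := ℝ) hP.1 hQ.1 ξ (mod_cast le_top)
  refine key.trans ?_
  have step : ∀ i ∈ Finset.range (n+1),
      (n.choose i : ℝ) * ‖iteratedDeriv i P ξ‖ * ‖iteratedDeriv (n-i) Q ξ‖ ≤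
      (n.choose i : ℝ) * ((C * C') * (1+|ξ|)^(k+k') * Real.exp ((a+b) * bb ξ)) := by
    intro i hi
    have h1 := hb i (Nat.lt_succ_iff.mp (Finset.mem_range.mp hi)) ξ
    have h2 := hb' (n-i) (Nat.sub_le _ _) ξ
    have hm : ‖iteratedDeriv i P ξ‖ * ‖iteratedDeriv (n-i) Q ξ‖ ≤
        (C * (1+|ξ|)^k * Real.exp (a*bb ξ)) * (C' * (1+|ξ|)^k' * Real.exp (b*bb ξ)) :=
      mul_le_mul h1 h2 (norm_nonneg _) (by positivity)
    calc (n.choose i : ℝ) * ‖iteratedDeriv i P ξ‖ * ‖iteratedDeriv (n-i) Q ξ‖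
        = (n.choose i : ℝ) * (‖iteratedDeriv i P ξ‖ * ‖iteratedDeriv (n-i) Q ξ‖) := by ring
      _ ≤ (n.choose i : ℝ) * ((C * (1+|ξ|)^k * Real.exp (a*bb ξ)) * (C' * (1+|ξ|)^k' * Real.exp (b*bb ξ))) :=
          mul_le_mul_of_nonneg_left hm (Nat.cast_nonneg _)
      _ = (n.choose i : ℝ) * ((C * C') * (1+|ξ|)^(k+k') * Real.exp ((a+b) * bb ξ)) := by
          rw [pow_add, add_mul, Real.exp_add]; ring
  calc (∑ i ∈ Finset.range (n + 1),
      (n.choose i : ℝ) * ‖iteratedDeriv i P ξ‖ * ‖iteratedDeriv (n-i) Q ξ‖)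
      ≤ ∑ i ∈ Finset.range (n+1),
        (n.choose i : ℝ) * ((C * C') * (1+|ξ|)^(k+k') * Real.exp ((a+b) * bb ξ)) :=
        Finset.sum_le_sum step
    _ = (∑ i ∈ Finset.range (n+1), (n.choose i : ℝ)) * ((C * C') * (1+|ξ|)^(k+k') * Real.exp ((a+b) * bb ξ)) := by
        rw [← Finset.sum_mul]
    _ ≤ 2^n * (C * C') * (1+|ξ|)^(k+k') * Real.exp ((a+b) * bb ξ) := by
        have : (∑ i ∈ Finset.range (n+1), (n.choose i : ℝ)) = 2^n := by
          rw [← Nat.cast_sum]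
          norm_cast
          simpa using Nat.sum_range_choose n
        rw [this]; ring_nf; exact le_refl _


lemma iteratedDeriv_const_succ (m : ℕ) (z : ℂ) :
    iteratedDeriv (m+1) (fun _ : ℝ => z) = fun _ => 0 := by
  induction m generalizing z with
  | zero => ext ξ; simp [iteratedDeriv_one]
  | succ m ih =>
    rw [iteratedDeriv_succ']
    simp only [deriv_const']
    exact ih 0

lemma Dc_const (z : ℂ) : Dc 0 (fun _ => z) := by
  refine ⟨contDiff_const, fun n => ⟨‖z‖, 0, norm_nonneg _, fun ξ => ?_⟩⟩
  match n with
  | 0 => simp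
  | (m+1) => rw [iteratedDeriv_const_succ]; simp [norm_nonneg]

lemma Dc.neg {a P} (h : Dc a P) : Dc a (fun ξ => -P ξ) := by
  have := (Dc_const (-1 : ℂ)).mul h
  simpa using this

lemma Dc.sub {a P Q} (hP : Dc a P) (hQ : Dc a Q) : Dc a (fun ξ => P ξ - Q ξ) := by
  have := hP.add hQ.neg
  simpa [sub_eq_add_neg] using this

lemma Dc.const_mul {a P} (h : Dc a P) (z : ℂ) : Dc a (fun ξ => z * P ξ) := by
  have := (Dc_const z).mul h
  simpa using this


lemma norm_iteratedDeriv_ofReal (g : ℝ → ℝ) (hg : ContDiff ℝ ∞ g) (n : ℕ) (ξ : ℝ) :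
    ‖iteratedDeriv n (fun x => ((g x : ℝ) : ℂ)) ξ‖ = |iteratedDeriv n g ξ| := by
  have h1 : (fun x => ((g x : ℝ) : ℂ)) = (Complex.ofRealLI ∘ g) := rfl
  rw [← norm_iteratedFDeriv_eq_norm_iteratedDeriv, h1,
    Complex.ofRealLI.norm_iteratedFDeriv_comp_left (contDiff_infty.1 hg n).contDiffAt le_rfl,
    norm_iteratedFDeriv_eq_norm_iteratedDeriv, Real.norm_eq_abs]

lemma Dc_ofReal {g : ℝ → ℝ} (hg : ContDiff ℝ ∞ g)
    (hb : ∀ n : ℕ, ∃ (C : ℝ) (k : ℕ), 0 ≤ C ∧ ∀ ξ, |iteratedDeriv n g ξ| ≤ C * (1+|ξ|)^k) :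
    Dc 0 (fun ξ => ((g ξ : ℝ) : ℂ)) := by
  refine ⟨Complex.ofRealCLM.contDiff.comp hg, fun n => ?_⟩
  obtain ⟨C, k, hC, h⟩ := hb n
  refine ⟨C, k, hC, fun ξ => ?_⟩
  rw [norm_iteratedDeriv_ofReal g hg n ξ]
  simpa using h ξ



lemma Dc_bbc : Dc 0 (fun ξ => ((bb ξ : ℝ) : ℂ)) := by
  refine Dc_ofReal contDiff_bb (fun n => ?_)
  match n with
  | 0 =>
    exact ⟨1, 1, zero_le_one, fun ξ => by
      simpa [abs_of_pos (bb_pos ξ)] using (bb_le ξ).trans (by simp)⟩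
  | (m+1) =>
    obtain ⟨p, hp⟩ := iteratedDeriv_bb_succ m
    obtain ⟨C, hC, hpb⟩ := poly_bound p
    refine ⟨C, p.natDegree, hC, fun ξ => ?_⟩
    rw [hp ξ]
    have h1 : (1:ℝ) ≤ bb ξ ^ (2*m+1) := one_le_pow₀ (one_le_bb ξ)
    have : |p.eval ξ / bb ξ ^ (2*m+1)| ≤ |p.eval ξ| := by
      rw [abs_div, abs_of_pos (by positivity : (0:ℝ) < bb ξ ^ (2*m+1))]
      exact div_le_self (abs_nonneg _) h1
    exact this.trans (hpb ξ)

lemma Dc_congr {a : ℝ} {P Q : ℝ → ℂ} (h : Dc a P) (he : ∀ ξ, P ξ = Q ξ) : Dc a Q := by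
  have : P = Q := funext he
  rwa [this] at h

lemma Dc_bb'c : Dc 0 (fun ξ => ((ξ / bb ξ : ℝ) : ℂ)) := by
  refine Dc_congr Dc_bbc.deriv (fun ξ => ?_)
  have : deriv (fun ξ => ((bb ξ : ℝ) : ℂ)) ξ = ((ξ / bb ξ : ℝ) : ℂ) :=
    ((hasDerivAt_bb ξ).ofReal_comp).deriv
  rw [this]

noncomputable def Ea (a : ℝ) : ℝ → ℂ := fun ξ => Complex.exp ((a * bb ξ : ℝ) : ℂ)

lemma contDiff_Ea (a : ℝ) : ContDiff ℝ ∞ (Ea a) :=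
  Complex.contDiff_exp.comp (Complex.ofRealCLM.contDiff.comp (contDiff_const.mul contDiff_bb))

lemma hasDerivAt_Ea (a : ℝ) (ξ : ℝ) :
    HasDerivAt (Ea a) (((a * (ξ / bb ξ) : ℝ) : ℂ) * Ea a ξ) ξ := by
  have h1 : HasDerivAt (fun ξ => a * bb ξ) (a * (ξ / bb ξ)) ξ := (hasDerivAt_bb ξ).const_mul a
  have h2 := (h1.ofReal_comp).cexp
  have h3 : ((a * (ξ / bb ξ) : ℝ) : ℂ) * Ea a ξ = Ea a ξ * ((a * (ξ / bb ξ) : ℝ) : ℂ) :=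
    mul_comm _ _
  rw [h3]
  exact h2

lemma norm_Ea (a : ℝ) (ξ : ℝ) : ‖Ea a ξ‖ = Real.exp (a * bb ξ) := by
  simp [Ea, Complex.norm_exp]

lemma Ea_structure (a : ℝ) (n : ℕ) :
    ∃ g : ℝ → ℂ, Dc 0 g ∧ ∀ ξ, iteratedDeriv n (Ea a) ξ = g ξ * Ea a ξ := by
  induction n with
  | zero => exact ⟨fun _ => 1, Dc_const 1, fun ξ => by simp⟩
  | succ n ih =>
    obtain ⟨g, hg, hgE⟩ := ih
    have hc : Dc 0 (fun ξ => ((a * (ξ / bb ξ) : ℝ) : ℂ)) := by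
      have := Dc_bb'c.const_mul (a : ℂ)
      refine Dc_congr this (fun ξ => ?_)
      push_cast
      ring
    refine ⟨fun ξ => deriv g ξ + g ξ * ((a * (ξ / bb ξ) : ℝ) : ℂ), ?_, fun ξ => ?_⟩
    · have hmul := hg.mul hc
      rw [zero_add] at hmul
      exact hg.deriv.add hmul
    · rw [iteratedDeriv_succ]
      have he : deriv (iteratedDeriv n (Ea a)) ξ = deriv (fun ξ => g ξ * Ea a ξ) ξ := by
        congr 1; funext t; exact hgE t
      rw [he]
      have hgd : HasDerivAt g (deriv g ξ) ξ :=
        (hg.smooth.differentiable (by simp)).differentiableAt.hasDerivAt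
      have := hgd.mul (hasDerivAt_Ea a ξ)
      have this' : HasDerivAt (fun ξ => g ξ * Ea a ξ) _ ξ := this
      rw [this'.deriv]
      ring

lemma Dc_Ea (a : ℝ) : Dc a (Ea a) := by
  refine ⟨contDiff_Ea a, fun n => ?_⟩
  obtain ⟨g, hg, hgE⟩ := Ea_structure a n
  obtain ⟨C, k, hC, hb⟩ := hg.2 0
  refine ⟨C, k, hC, fun ξ => ?_⟩
  rw [hgE ξ, norm_mul, norm_Ea]
  have := hb ξ
  simp only [iteratedDeriv_zero] at this
  have h0 : Real.exp (0 * bb ξ) = 1 := by simp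
  rw [h0, mul_one] at this
  exact mul_le_mul_of_nonneg_right this (Real.exp_nonneg _)


lemma iteratedDeriv_const_succ' {E : Type*} [NormedAddCommGroup E] [NormedSpace ℝ E]
    (m : ℕ) (z : E) : iteratedDeriv (m+1) (fun _ : ℝ => z) = fun _ => 0 := by
  induction m generalizing z with
  | zero => ext ξ; simp [iteratedDeriv_one]
  | succ m ih =>
    rw [iteratedDeriv_succ']
    simp only [deriv_const']
    exact ih 0

lemma Dc_X : Dc 0 (fun ξ : ℝ => (ξ : ℂ)) := by
  refine Dc_ofReal contDiff_id (fun n => ?_)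
  match n with
  | 0 => exact ⟨1, 1, zero_le_one, fun ξ => by
      simpa using (le_of_eq (abs_abs ξ)).trans (by linarith [abs_nonneg ξ])⟩
  | 1 => exact ⟨1, 0, zero_le_one, fun ξ => by
      simp [iteratedDeriv_one]⟩
  | (m+2) =>
    refine ⟨1, 0, zero_le_one, fun ξ => ?_⟩
    rw [iteratedDeriv_succ', show deriv (fun ξ : ℝ => ξ) = fun _ => (1:ℝ) by funext; simp,
      iteratedDeriv_const_succ']
    simp

section Main

variable (d D L μ c₀ y : ℝ)
variable (hd : 0 < d) (hD : 0 < D) (hL : 0 < L) (hμ : 0 < μ) (hc₀ : 0 < c₀)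
variable (hyL : -L ≤ y) (hy : y < 0)

noncomputable def Nf : ℝ → ℂ := fun ξ => ((Real.cosh (bb ξ * (y + L)) : ℝ) : ℂ)

noncomputable def Den : ℝ → ℂ := fun ξ =>
  ((d * bb ξ * Real.sinh (bb ξ * L) : ℝ) : ℂ)
    + (((D / μ * ξ ^ 2 : ℝ) : ℂ) + ((c₀ / μ * ξ : ℝ) : ℂ) * Complex.I)
      * ((Real.cosh (bb ξ * L) : ℝ) : ℂ)

lemma cosh_decomp (c ξ : ℝ) : ((Real.cosh (bb ξ * c) : ℝ) : ℂ)
    = (1/2 : ℂ) * Ea c ξ + (1/2 : ℂ) * Ea (-c) ξ := by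
  rw [show bb ξ * c = c * bb ξ from mul_comm _ _, Real.cosh_eq]
  simp only [Ea, neg_mul]
  push_cast
  ring

lemma sinh_decomp (c ξ : ℝ) : ((Real.sinh (bb ξ * c) : ℝ) : ℂ)
    = (1/2 : ℂ) * Ea c ξ - (1/2 : ℂ) * Ea (-c) ξ := by
  rw [show bb ξ * c = c * bb ξ from mul_comm _ _, Real.sinh_eq]
  simp only [Ea, neg_mul]
  push_cast
  ring

lemma Dc_cast {a a' : ℝ} {P : ℝ → ℂ} (h : Dc a P) (ha : a = a') : Dc a' P := ha ▸ h

lemma HasDerivAt.cpow_nat {F : ℝ → ℂ} {F' : ℂ} {x : ℝ} (h : HasDerivAt F F' x) (m : ℕ) :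
    HasDerivAt (fun ξ => F ξ ^ m) ((m : ℂ) * F x ^ (m-1) * F') x := by
  induction m with
  | zero => simpa using hasDerivAt_const x (1:ℂ)
  | succ m ih =>
    have hmul : HasDerivAt (fun ξ => F ξ ^ m * F ξ) _ x := ih.mul h
    have hfun : (fun ξ => F ξ ^ m * F ξ) = fun ξ => F ξ ^ (m+1) := by
      funext t; rw [pow_succ]
    rw [hfun] at hmul
    convert hmul using 1
    match m with
    | 0 => simp
    | (m+1) =>
      push_cast
      rw [pow_succ]
      ring

include hyL in
lemma Dc_Nf : Dc (y + L) (Nf L y) := by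
  have h1 : Dc (y+L) (Ea (y+L)) := Dc_Ea (y+L)
  have h2 : Dc (y+L) (Ea (-(y+L))) := (Dc_Ea (-(y+L))).of_le (by linarith)
  have h3 := (h1.const_mul (1/2 : ℂ)).add (h2.const_mul (1/2 : ℂ))
  exact Dc_congr h3 (fun ξ => (cosh_decomp (y+L) ξ).symm)

lemma Dc_cosh (c : ℝ) (hc : 0 ≤ c) : Dc c (fun ξ => ((Real.cosh (bb ξ * c) : ℝ) : ℂ)) := by
  have h1 : Dc c (Ea c) := Dc_Ea c
  have h2 : Dc c (Ea (-c)) := (Dc_Ea (-c)).of_le (by linarith)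
  exact Dc_congr ((h1.const_mul (1/2:ℂ)).add (h2.const_mul (1/2:ℂ)))
    (fun ξ => (cosh_decomp c ξ).symm)

lemma Dc_sinh (c : ℝ) (hc : 0 ≤ c) : Dc c (fun ξ => ((Real.sinh (bb ξ * c) : ℝ) : ℂ)) := by
  have h1 : Dc c (Ea c) := Dc_Ea c
  have h2 : Dc c (Ea (-c)) := (Dc_Ea (-c)).of_le (by linarith)
  exact Dc_congr ((h1.const_mul (1/2:ℂ)).sub (h2.const_mul (1/2:ℂ)))
    (fun ξ => (sinh_decomp c ξ).symm)

include hL in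
lemma Dc_Den : Dc L (Den d D L μ c₀) := by
  have t1 : Dc L (fun ξ => ((d * bb ξ * Real.sinh (bb ξ * L) : ℝ) : ℂ)) := by
    have := ((Dc_bbc.mul (Dc_sinh L hL.le)).const_mul (d : ℂ))
    rw [zero_add] at this
    refine Dc_congr this (fun ξ => ?_)
    push_cast
    ring
  have hpoly : Dc 0 (fun ξ => (((D / μ * ξ ^ 2 : ℝ) : ℂ) + ((c₀ / μ * ξ : ℝ) : ℂ) * Complex.I)) := by
    have hx2 : Dc 0 (fun ξ : ℝ => ((D / μ * ξ ^ 2 : ℝ) : ℂ)) := by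
      have := (Dc_X.mul Dc_X).const_mul ((D/μ : ℝ) : ℂ)
      rw [zero_add] at this
      refine Dc_congr this (fun ξ => ?_)
      push_cast
      ring
    have hx1 : Dc 0 (fun ξ : ℝ => ((c₀ / μ * ξ : ℝ) : ℂ) * Complex.I) := by
      have := (Dc_X.const_mul (((c₀/μ : ℝ) : ℂ) * Complex.I))
      refine Dc_congr this (fun ξ => ?_)
      push_cast
      ring
    exact hx2.add hx1
  have t2 := hpoly.mul (Dc_cosh L hL.le)
  rw [zero_add] at t2
  exact t1.add t2

include hL hd hD hμ in
lemma Den_lb (ξ : ℝ) :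
    d * ((1 - Real.exp (-(2*L)))/2) * Real.exp (L * bb ξ) ≤ ‖Den d D L μ c₀ ξ‖ := by
  have hre : (Den d D L μ c₀ ξ).re
      = d * bb ξ * Real.sinh (bb ξ * L) + (D / μ * ξ^2) * Real.cosh (bb ξ * L) := by
    simp [Den, Complex.add_re, Complex.mul_re, Complex.add_im, ← Complex.ofReal_pow,
      ← Complex.ofReal_sinh, ← Complex.ofReal_cosh]
  have ht : L ≤ bb ξ * L := le_mul_of_one_le_left hL.le (one_le_bb ξ)
  have hsinh : ((1 - Real.exp (-(2*L)))/2) * Real.exp (bb ξ * L) ≤ Real.sinh (bb ξ * L) := by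
    rw [Real.sinh_eq]
    have h1 : Real.exp (-(bb ξ * L)) ≤ Real.exp (bb ξ * L) * Real.exp (-(2*L)) := by
      rw [← Real.exp_add]
      apply Real.exp_le_exp.2
      linarith
    nlinarith [Real.exp_pos (bb ξ * L)]
  have hre_le : (Den d D L μ c₀ ξ).re ≤ ‖Den d D L μ c₀ ξ‖ := by
    exact Complex.re_le_norm _
  have hsp : 0 < Real.sinh (bb ξ * L) := Real.sinh_pos_iff.2 (by nlinarith [one_le_bb ξ])
  have hDμ : 0 ≤ D / μ := le_of_lt (div_pos hD hμ)
  have hcp : 0 < Real.cosh (bb ξ * L) := Real.cosh_pos _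
  have h2 : d * ((1 - Real.exp (-(2*L)))/2) * Real.exp (L * bb ξ) ≤ (Den d D L μ c₀ ξ).re := by
    rw [hre, show L * bb ξ = bb ξ * L from mul_comm _ _]
    have hb1 := one_le_bb ξ
    nlinarith [mul_le_mul_of_nonneg_left hsinh hd.le, mul_nonneg hDμ (sq_nonneg ξ),
      mul_nonneg (mul_nonneg hDμ (sq_nonneg ξ)) hcp.le, mul_pos hd hsp]
  linarith

include hL in
lemma exp_c_pos : 0 < (1 - Real.exp (-(2*L)))/2 := by
  have : Real.exp (-(2*L)) < 1 := Real.exp_lt_one_iff.2 (by linarith)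
  linarith

include hL hd hD hμ in
lemma Den_ne (ξ : ℝ) : Den d D L μ c₀ ξ ≠ 0 := by
  have h1 := Den_lb d D L μ c₀ hd hD hL hμ ξ
  have h2 : 0 < d * ((1 - Real.exp (-(2*L)))/2) * Real.exp (L * bb ξ) := by
    have := exp_c_pos L hL
    positivity
  intro h
  rw [h] at h1
  simp at h1
  linarith

include hL hd hD hμ in
lemma recip_structure (n : ℕ) :
    ∃ P : ℝ → ℂ, Dc ((n:ℝ)*L) P ∧
      ∀ ξ, iteratedDeriv n (fun ξ => (Den d D L μ c₀ ξ)⁻¹) ξ = P ξ / (Den d D L μ c₀ ξ)^(n+1) := by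
  have hne := Den_ne d D L μ c₀ hd hD hL hμ
  have hDen := Dc_Den d D L μ c₀ hL
  induction n with
  | zero =>
    refine ⟨fun _ => 1, Dc_cast (Dc_const 1) (by push_cast; ring), fun ξ => by simp⟩
  | succ n ih =>
    obtain ⟨P, hP, hPe⟩ := ih
    refine ⟨fun ξ => deriv P ξ * Den d D L μ c₀ ξ - ((n:ℂ)+1) * (P ξ * deriv (Den d D L μ c₀) ξ),
      ?_, fun ξ => ?_⟩
    · have h1 := hP.deriv.mul hDen
      have h2 := ((hP.mul hDen.deriv).const_mul ((n:ℂ)+1))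
      exact Dc_cast (h1.sub h2) (by push_cast; ring)
    · rw [iteratedDeriv_succ]
      have he : deriv (iteratedDeriv n (fun ξ => (Den d D L μ c₀ ξ)⁻¹)) ξ
          = deriv (fun ξ => P ξ / (Den d D L μ c₀ ξ)^(n+1)) ξ := by
        congr 1; funext t; exact hPe t
      rw [he]
      have hPd : HasDerivAt P (deriv P ξ) ξ :=
        (hP.smooth.differentiable (by simp)).differentiableAt.hasDerivAt
      have hDd : HasDerivAt (Den d D L μ c₀) (deriv (Den d D L μ c₀) ξ) ξ :=
        (hDen.smooth.differentiable (by simp)).differentiableAt.hasDerivAt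
      have hpow : HasDerivAt (fun ξ => (Den d D L μ c₀ ξ)^(n+1))
          (((n+1 : ℕ) : ℂ) * (Den d D L μ c₀ ξ)^(n+1-1) * deriv (Den d D L μ c₀) ξ) ξ :=
        HasDerivAt.cpow_nat hDd (n+1)
      have h3 := hPd.div hpow (pow_ne_zero _ (hne ξ))
      have h3' : HasDerivAt (fun ξ => P ξ / Den d D L μ c₀ ξ ^ (n+1)) _ ξ := h3
      rw [h3'.deriv, Nat.add_sub_cancel]
      push_cast
      have hz := hne ξ
      field_simp
      ring

include hL hd hD hμ in
lemma Dc_inv : Dc (-L) (fun ξ => (Den d D L μ c₀ ξ)⁻¹) := by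
  have hne := Den_ne d D L μ c₀ hd hD hL hμ
  have hDen := Dc_Den d D L μ c₀ hL
  refine ⟨hDen.smooth.inv hne, fun n => ?_⟩
  obtain ⟨P, hP, hPe⟩ := recip_structure d D L μ c₀ hd hD hL hμ n
  obtain ⟨C, k, hC, hb⟩ := hP.2 0
  set c : ℝ := d * ((1 - Real.exp (-(2*L)))/2) with hc_def
  have hc : 0 < c := mul_pos hd (exp_c_pos L hL)
  refine ⟨C / c^(n+1), k, by positivity, fun ξ => ?_⟩
  have hlb := Den_lb d D L μ c₀ hd hD hL hμ ξ
  have hP0 : ‖P ξ‖ ≤ C * (1+|ξ|)^k * Real.exp ((n:ℝ)*L * bb ξ) := by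
    have := hb ξ; simpa using this
  rw [hPe ξ]
  rw [norm_div, norm_pow]
  have hDpos : 0 < ‖Den d D L μ c₀ ξ‖ := lt_of_lt_of_le (by positivity) hlb
  have hpow_lb : (c * Real.exp (L * bb ξ))^(n+1) ≤ ‖Den d D L μ c₀ ξ‖^(n+1) :=
    pow_le_pow_left₀ (by positivity) hlb _
  have step : ‖P ξ‖ / ‖Den d D L μ c₀ ξ‖^(n+1)
      ≤ (C * (1+|ξ|)^k * Real.exp ((n:ℝ)*L * bb ξ)) / (c * Real.exp (L * bb ξ))^(n+1) :=
    div_le_div₀ (by positivity) hP0 (by positivity) hpow_lb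
  refine step.trans (le_of_eq ?_)
  have hmerge : Real.exp ((n:ℝ)*L*bb ξ)
      = Real.exp (-L * bb ξ) * Real.exp (((n+1:ℕ):ℝ) * (L * bb ξ)) := by
    rw [← Real.exp_add]; congr 1; push_cast; ring
  rw [mul_pow, ← Real.exp_nat_mul, hmerge]
  field_simp

end Main




lemma texp {ε : ℝ} (hε : 0 < ε) (j : ℕ) {t : ℝ} (ht : 0 ≤ t) :
    t^j * Real.exp (-(ε*t)) ≤ (j.factorial : ℝ) / ε^j := by
  have h := Real.pow_div_factorial_le_exp (x := ε*t) (mul_nonneg hε.le ht) j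
  have hj : (0:ℝ) < (j.factorial : ℝ) := Nat.cast_pos.2 (Nat.factorial_pos j)
  have hεj : (0:ℝ) < ε^j := by positivity
  have h1 : ε^j * t^j ≤ (j.factorial : ℝ) * Real.exp (ε*t) := by
    have h2 := (div_le_iff₀ hj).1 h
    calc ε^j * t^j = (ε*t)^j := by rw [mul_pow]
      _ ≤ Real.exp (ε*t) * (j.factorial:ℝ) := h2
      _ = (j.factorial:ℝ) * Real.exp (ε*t) := mul_comm _ _
  calc t^j * Real.exp (-(ε*t)) = (ε^j * t^j) * Real.exp (-(ε*t)) / ε^j := by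
        field_simp
    _ ≤ ((j.factorial:ℝ) * Real.exp (ε*t)) * Real.exp (-(ε*t)) / ε^j := by
        gcongr
    _ = (j.factorial:ℝ)/ε^j := by
        rw [mul_assoc, ← Real.exp_add]
        simp

end WentzellAux

open WentzellAux in
theorem wentzell_kernel_schwartz (d D L μ c₀ : ℝ)
    (hd : 0 < d) (hD : 0 < D) (hL : 0 < L) (hμ : 0 < μ) (hc₀ : 0 < c₀) :
    ∀ y : ℝ, -L ≤ y → y < 0 →
      ∃ K : SchwartzMap ℝ ℂ, ∀ ξ : ℝ,
        K ξ = ((Real.cosh (Real.sqrt (ξ ^ 2 + 1) * (y + L)) : ℝ) : ℂ) /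
          (((d * Real.sqrt (ξ ^ 2 + 1) * Real.sinh (Real.sqrt (ξ ^ 2 + 1) * L) : ℝ) : ℂ)
            + (((D / μ * ξ ^ 2 : ℝ) : ℂ) + ((c₀ / μ * ξ : ℝ) : ℂ) * Complex.I)
              * ((Real.cosh (Real.sqrt (ξ ^ 2 + 1) * L) : ℝ) : ℂ)) := by
  intro y hyL hy
  have hNf := Dc_Nf L y hyL
  have hInv := Dc_inv d D L μ c₀ hd hD hL hμ
  set f : ℝ → ℂ := fun ξ => Nf L y ξ * (Den d D L μ c₀ ξ)⁻¹ with hf_def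
  have hf : Dc y f := Dc_cast (hNf.mul hInv) (by ring)
  have hdecay : ∀ k n : ℕ, ∃ C : ℝ, ∀ x : ℝ, ‖x‖ ^ k * ‖iteratedFDeriv ℝ n f x‖ ≤ C := by
    intro k n
    obtain ⟨C, m, hC, hb⟩ := hf.2 n
    refine ⟨C * 2^(k+m) * ((k+m).factorial / (-y)^(k+m)), fun x => ?_⟩
    have hy' : 0 < -y := by linarith
    have h1 : ‖x‖^k * ‖iteratedFDeriv ℝ n f x‖ = |x|^k * ‖iteratedDeriv n f x‖ := by
      rw [norm_iteratedFDeriv_eq_norm_iteratedDeriv, Real.norm_eq_abs]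
    rw [h1]
    have hbbx := bb_pos x
    have h2 : |x|^k * ‖iteratedDeriv n f x‖ ≤ (1+|x|)^k * (C * (1+|x|)^m * Real.exp (y * bb x)) := by
      apply mul_le_mul (pow_le_pow_left₀ (abs_nonneg _) (by linarith) _) (hb x)
        (norm_nonneg _) (by positivity)
    refine h2.trans ?_
    have h3 : (1+|x|)^k * (C * (1+|x|)^m * Real.exp (y * bb x))
        = C * ((1+|x|)^(k+m) * Real.exp (y * bb x)) := by
      rw [pow_add]; ring
    rw [h3]
    have h4 : (1+|x|)^(k+m) ≤ (2 * bb x)^(k+m) :=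
      pow_le_pow_left₀ (by positivity) (by nlinarith [one_le_bb x, abs_le_bb x]) _
    have h5 : (1+|x|)^(k+m) * Real.exp (y * bb x) ≤ (2*bb x)^(k+m) * Real.exp (y * bb x) :=
      mul_le_mul_of_nonneg_right h4 (Real.exp_nonneg _)
    have h6 : (2*bb x)^(k+m) * Real.exp (y * bb x)
        = 2^(k+m) * (bb x^(k+m) * Real.exp (-((-y) * bb x))) := by
      have hyy : y * bb x = -((-y) * bb x) := by ring
      rw [mul_pow, hyy]
      ring
    have h7 : bb x^(k+m) * Real.exp (-((-y) * bb x)) ≤ ((k+m).factorial : ℝ) / (-y)^(k+m) :=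
      texp hy' (k+m) hbbx.le
    calc C * ((1+|x|)^(k+m) * Real.exp (y * bb x))
        ≤ C * ((2*bb x)^(k+m) * Real.exp (y * bb x)) := mul_le_mul_of_nonneg_left h5 hC
      _ = C * (2^(k+m) * (bb x^(k+m) * Real.exp (-((-y) * bb x)))) := by rw [h6]
      _ ≤ C * (2^(k+m) * (((k+m).factorial : ℝ) / (-y)^(k+m))) := by
          apply mul_le_mul_of_nonneg_left (mul_le_mul_of_nonneg_left h7 (by positivity)) hC
      _ = C * 2^(k+m) * ((k+m).factorial / (-y)^(k+m)) := by ring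
  refine ⟨⟨f, hf.smooth, hdecay⟩, fun ξ => ?_⟩
  show f ξ = _
  rw [hf_def]
  simp only [Nf, Den, bb, div_eq_mul_inv]
end

section
/- Let d, D, μ, c₀, r, α_r > 0 with α_r = -Dr² + c₀r > 0, and let γ : ℝ → ℝ be continuous with γ ≥ γ₀ > 0. Suppose (φ, ψ) is a bounded C² solution on ℝ × [-L,0] of: -Dφ'' + (c₀-2Dr)φ' + (μ+α_r)φ - ψ(·,0) = g on ℝ; (-dΔ + (c₀-2dr)∂_x + γ(x))ψ = h in the strip; d∂_yψ(x,0) = μφ(x) - ψ(x,0); ∂_yψ(x,-L) = 0; with g, h bounded and (φ,ψ) → 0 at x = ±∞ in appropriate sense. Then ‖ψ‖_∞ ≤ (1/γ₀)‖h‖_∞ + (μ/α_r)‖g‖_∞ and ‖φ‖_∞ ≤ (1/(γ₀(μ+α_r)))‖h‖_∞ + (1/α_r)‖g‖_∞. -/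
open Set Filter Topology
set_option maxHeartbeats 1000000

lemma deriv_nonneg_of_max_right {f : ℝ → ℝ} {a b : ℝ} (hab : a < b)
    (hf : DifferentiableAt ℝ f b) (hmax : ∀ y ∈ Set.Icc a b, f y ≤ f b) :
    0 ≤ deriv f b := by
  have hs : Tendsto (slope f b) (𝓝[≠] b) (𝓝 (deriv f b)) :=
    hasDerivAt_iff_tendsto_slope.1 hf.hasDerivAt
  have hs' : Tendsto (slope f b) (𝓝[<] b) (𝓝 (deriv f b)) :=
    hs.mono_left (nhdsWithin_mono _ (fun y hy => ne_of_lt hy))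
  refine ge_of_tendsto hs' ?_
  filter_upwards [Ioo_mem_nhdsLT_of_mem ⟨hab, le_refl b⟩] with y hy
  have h1 : f y - f b ≤ 0 := sub_nonpos.2 (hmax y ⟨hy.1.le, hy.2.le⟩)
  have h2 : y - b < 0 := sub_neg.2 hy.2
  rw [slope_def_field]
  exact div_nonneg_of_nonpos h1 h2.le

lemma second_deriv_nonpos_of_max {f : ℝ → ℝ} {a b : ℝ} (hab : a < b)
    (hf : ContDiff ℝ 2 f) (hmax : ∀ y ∈ Set.Icc a b, f y ≤ f a)
    (hd : deriv f a = 0) : deriv (deriv f) a ≤ 0 := by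
  by_contra hpos
  push_neg at hpos
  have hdf : ContDiff ℝ 1 (deriv f) := (contDiff_succ_iff_deriv.1 (by norm_num at hf ⊢; exact hf)).2.2
  have hda : DifferentiableAt ℝ (deriv f) a := hdf.differentiable one_ne_zero a
  have hs : Tendsto (slope (deriv f) a) (𝓝[≠] a) (𝓝 (deriv (deriv f) a)) :=
    hasDerivAt_iff_tendsto_slope.1 hda.hasDerivAt
  have hs' : Tendsto (slope (deriv f) a) (𝓝[>] a) (𝓝 (deriv (deriv f) a)) :=
    hs.mono_left (nhdsWithin_mono _ (fun y hy => ne_of_gt hy))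
  have hev : ∀ᶠ y in 𝓝[>] a, 0 < slope (deriv f) a y :=
    hs'.eventually (eventually_gt_nhds hpos)
  have hev2 : ∀ᶠ y in 𝓝[>] a, 0 < deriv f y := by
    filter_upwards [hev, self_mem_nhdsWithin] with y hy hy'
    rw [slope_def_field, hd, sub_zero] at hy
    have hya : 0 < y - a := sub_pos.2 hy'
    have := mul_pos hy hya
    rwa [div_mul_cancel₀] at this
    exact ne_of_gt hya
  rw [eventually_nhdsWithin_iff, Metric.eventually_nhds_iff] at hev2
  obtain ⟨δ, hδ, hball⟩ := hev2
  set b' := min b (a + δ/2) with hb'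
  have hab' : a < b' := lt_min hab (by linarith)
  have hmono : StrictMonoOn f (Set.Icc a b') := by
    refine strictMonoOn_of_deriv_pos (convex_Icc _ _) (hf.continuous.continuousOn) ?_
    intro y hy
    rw [interior_Icc] at hy
    refine hball ?_ hy.1
    have : y < a + δ/2 := lt_of_lt_of_le hy.2 (min_le_right _ _)
    rw [Real.dist_eq, abs_of_pos (sub_pos.2 hy.1)]
    linarith
  have h1 := hmono (left_mem_Icc.2 hab'.le) (right_mem_Icc.2 hab'.le) hab'
  have h2 := hmax b' ⟨hab'.le, min_le_left _ _⟩
  linarith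

section
variable {f : ℝ × ℝ → ℝ}

lemma hasDerivAt_slice_x (hf : Differentiable ℝ f) (x y : ℝ) :
    HasDerivAt (fun x' => f (x', y)) (fderiv ℝ f (x, y) (1, 0)) x := by
  have hline : HasDerivAt (fun x' : ℝ => (x', y)) ((1 : ℝ), (0 : ℝ)) x :=
    HasDerivAt.prodMk (hasDerivAt_id x) (hasDerivAt_const x y)
  exact (hf (x, y)).hasFDerivAt.comp_hasDerivAt x hline

lemma contDiff_Dv {n : ℕ} (v : ℝ × ℝ) (hf : ContDiff ℝ (n + 1) f) :
    ContDiff ℝ n (fun p => fderiv ℝ f p v) := by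
  have h1 : ContDiff ℝ n (fderiv ℝ f) := hf.fderiv_right (le_refl _)
  exact h1.clm_apply contDiff_const

/-- slice second derivative in x as an fderiv expression -/
lemma slice_xx (hf : ContDiff ℝ 2 f) (x y : ℝ) :
    deriv (deriv (fun x' => f (x', y))) x
      = fderiv ℝ (fun p => fderiv ℝ f p (1, 0)) (x, y) (1, 0) := by
  have hdΨ : Differentiable ℝ f := hf.differentiable (by norm_num)
  have hpx : ContDiff ℝ 1 (fun p => fderiv ℝ f p (1, 0)) := by
    have := contDiff_Dv (n := 1) ((1 : ℝ), (0 : ℝ)) (by norm_num at hf ⊢; exact hf)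
    exact this
  have h1 : deriv (fun x' => f (x', y)) = fun x' => fderiv ℝ f (x', y) (1, 0) :=
    funext fun x' => (hasDerivAt_slice_x hdΨ x' y).deriv
  rw [h1]
  exact (hasDerivAt_slice_x (hpx.differentiable one_ne_zero) x y).deriv

lemma slice_x_eq (hf : ContDiff ℝ 2 f) (x y : ℝ) :
    deriv (fun x' => f (x', y)) x = fderiv ℝ f (x, y) (1, 0) :=
  (hasDerivAt_slice_x (hf.differentiable (by norm_num)) x y).deriv

lemma cont_slice_xx (hf : ContDiff ℝ 2 f) :
    Continuous (fun p => fderiv ℝ (fun q => fderiv ℝ f q (1, 0)) p (1, 0)) := by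
  have hpx : ContDiff ℝ 1 (fun p => fderiv ℝ f p (1, 0)) := by
    have := contDiff_Dv (n := 1) ((1 : ℝ), (0 : ℝ)) (by norm_num at hf ⊢; exact hf)
    exact this
  have h := contDiff_Dv (n := 0) ((1 : ℝ), (0 : ℝ))
    (f := fun p => fderiv ℝ f p (1, 0)) (by norm_num at hpx ⊢; exact hpx)
  exact h.continuous
end

lemma aux_upper (d D μ c₀ r L γ₀ α : ℝ)
    (hd : 0 < d) (hD : 0 < D) (hμ : 0 < μ) (hL : 0 < L) (hγ₀ : 0 < γ₀) (hα : 0 < α)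
    (γ : ℝ → ℝ) (hγ : ∀ x, γ₀ ≤ γ x)
    (φ : ℝ → ℝ) (ψ : ℝ → ℝ → ℝ) (g h : ℝ → ℝ) (Mg Mh : ℝ)
    (hφC2 : ContDiff ℝ 2 φ) (hψC2 : ContDiff ℝ 2 (fun p : ℝ × ℝ => ψ p.1 p.2))
    (hφb : ∃ M : ℝ, ∀ x, |φ x| ≤ M) (hψb : ∃ M : ℝ, ∀ x y, |ψ x y| ≤ M)
    (hgb : ∀ x, |g x| ≤ Mg) (hhb : ∀ x, |h x| ≤ Mh)
    (hroad : ∀ x : ℝ, -D * deriv (deriv φ) x + (c₀ - 2 * D * r) * deriv φ x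
      + (μ + α) * φ x - ψ x 0 = g x)
    (hpde : ∀ x : ℝ, ∀ y ∈ Set.Ioo (-L) (0 : ℝ),
      -d * (deriv (deriv (fun x' => ψ x' y)) x + deriv (deriv (fun y' => ψ x y')) y)
        + (c₀ - 2 * d * r) * deriv (fun x' => ψ x' y) x + γ x * ψ x y = h x)
    (hRobin : ∀ x : ℝ, d * deriv (fun y' => ψ x y') 0 = μ * φ x - ψ x 0)
    (hNeu : ∀ x : ℝ, deriv (fun y' => ψ x y') (-L) = 0)
    (hφlim : Filter.Tendsto φ Filter.atBot (nhds 0) ∧ Filter.Tendsto φ Filter.atTop (nhds 0))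
    (hψlim : ∀ ε > 0, ∃ X : ℝ, ∀ x : ℝ, X ≤ |x| → ∀ y ∈ Set.Icc (-L) 0, |ψ x y| < ε) :
    (∀ x : ℝ, ∀ y ∈ Set.Icc (-L) (0 : ℝ), ψ x y ≤ (1 / γ₀) * Mh + (μ / α) * Mg) ∧
    (∀ x : ℝ, φ x ≤ (1 / (γ₀ * (μ + α))) * Mh + (1 / α) * Mg) := by
  obtain ⟨Mφ, hMφ⟩ := hφb
  obtain ⟨Mψ, hMψ⟩ := hψb
  have hMg : 0 ≤ Mg := (abs_nonneg _).trans (hgb 0)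
  have hMh : 0 ≤ Mh := (abs_nonneg _).trans (hhb 0)
  -- suprema
  set Rs : Set ℝ := {z | ∃ x, ∃ y ∈ Set.Icc (-L) (0:ℝ), ψ x y = z} with hRs
  have hRne : Rs.Nonempty := ⟨ψ 0 0, 0, 0, ⟨by linarith, le_rfl⟩, rfl⟩
  have hRbdd : BddAbove Rs := ⟨Mψ, by rintro z ⟨x, y, _, rfl⟩; exact (le_abs_self _).trans (hMψ x y)⟩
  set S : ℝ := sSup Rs with hSdef
  have hψleS : ∀ x : ℝ, ∀ y ∈ Set.Icc (-L) (0:ℝ), ψ x y ≤ S :=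
    fun x y hy => le_csSup hRbdd ⟨x, y, hy, rfl⟩
  have hTbdd : BddAbove (Set.range φ) := ⟨Mφ, by rintro z ⟨x, rfl⟩; exact (le_abs_self _).trans (hMφ x)⟩
  set T : ℝ := sSup (Set.range φ) with hTdef
  have hφleT : ∀ x, φ x ≤ T := fun x => le_csSup hTbdd ⟨x, rfl⟩
  -- claim 1 : road estimate
  have claim1 : (μ + α) * max T 0 ≤ Mg + max S 0 := by
    rcases le_or_gt T 0 with hT | hT
    · rw [max_eq_right hT]
      have := le_max_right S 0
      nlinarith
    · rw [max_eq_left hT.le]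
      -- find a global maximizer of φ
      obtain ⟨z, ⟨xw, rfl⟩, hzw⟩ := exists_lt_of_lt_csSup (Set.range_nonempty φ) (half_lt_self hT)
      have h1 : ∀ᶠ x in Filter.atTop, |φ x| < T / 2 :=
        (hφlim.2.abs.mono_right (by rw [abs_zero])).eventually_lt_const (half_pos hT)
      have h2 : ∀ᶠ x in Filter.atBot, |φ x| < T / 2 :=
        (hφlim.1.abs.mono_right (by rw [abs_zero])).eventually_lt_const (half_pos hT)
      obtain ⟨N, hN⟩ := Filter.eventually_atTop.1 h1
      obtain ⟨N', hN'⟩ := Filter.eventually_atBot.1 h2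
      set lo := min N' 0 with hlo
      set hi := max N 0 with hhi
      have hlohi : lo ≤ hi := le_trans (min_le_right _ _) (le_max_right _ _)
      have hout : ∀ x, x ∉ Set.Icc lo hi → |φ x| < T / 2 := by
        intro x hx
        rw [Set.mem_Icc, not_and_or] at hx
        rcases hx with hx | hx
        · push_neg at hx
          exact hN' x (le_of_lt (lt_of_lt_of_le hx (min_le_left _ _)))
        · push_neg at hx
          exact hN x (le_of_lt (lt_of_le_of_lt (le_max_left N 0) hx))
      obtain ⟨x₁, hx₁mem, hx₁max⟩ := isCompact_Icc.exists_isMaxOn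
        ⟨lo, Set.left_mem_Icc.2 hlohi⟩ hφC2.continuous.continuousOn
      have hxw_in : xw ∈ Set.Icc lo hi := by
        by_contra hc
        have := hout xw hc
        have := le_abs_self (φ xw)
        linarith
      have hglobal : ∀ x, φ x ≤ φ x₁ := by
        intro x
        by_cases hx : x ∈ Set.Icc lo hi
        · exact hx₁max hx
        · have h3 := hout x hx
          have h4 : φ xw ≤ φ x₁ := hx₁max hxw_in
          have := le_abs_self (φ x)
          linarith
      have hφx₁ : φ x₁ = T :=
        le_antisymm (hφleT x₁) (csSup_le (Set.range_nonempty φ) (by rintro z ⟨x, rfl⟩; exact hglobal x))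
      have hderiv0 : deriv φ x₁ = 0 := by
        have : IsLocalMax φ x₁ := Filter.Eventually.of_forall hglobal
        exact this.deriv_eq_zero
      have hd2 : deriv (deriv φ) x₁ ≤ 0 :=
        second_deriv_nonpos_of_max (b := x₁ + 1) (by linarith) hφC2
          (fun y _ => hglobal y) hderiv0
      have hre := hroad x₁
      have hψ0 : ψ x₁ 0 ≤ max S 0 :=
        le_trans (hψleS x₁ 0 ⟨by linarith, le_rfl⟩) (le_max_left _ _)
      have hgx : g x₁ ≤ Mg := (le_abs_self _).trans (hgb x₁)
      have hDd2 : D * deriv (deriv φ) x₁ ≤ 0 := mul_nonpos_of_nonneg_of_nonpos hD.le hd2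
      rw [hderiv0] at hre
      rw [← hφx₁]
      nlinarith
  -- claim 2 : field estimate
  have claim2 : max S 0 ≤ max ((1 / γ₀) * Mh) (μ * max T 0) := by
    rcases le_or_gt S 0 with hS | hS
    · rw [max_eq_right hS]
      refine le_trans ?_ (le_max_left _ _)
      positivity
    · rw [max_eq_left hS.le]
      -- find a global maximizer of ψ over the strip
      obtain ⟨z, ⟨xw, yw, hyw, rfl⟩, hzw⟩ := exists_lt_of_lt_csSup hRne (half_lt_self hS)
      obtain ⟨X, hX⟩ := hψlim (S / 2) (half_pos hS)
      set X' := max X 0 with hX'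
      have hX'0 : (0:ℝ) ≤ X' := le_max_right _ _
      set Kc : Set (ℝ × ℝ) := Set.Icc (-X') X' ×ˢ Set.Icc (-L) 0 with hKc
      have hKcomp : IsCompact Kc := isCompact_Icc.prod isCompact_Icc
      have hKne : Kc.Nonempty := by
        refine ⟨(0, 0), Set.mk_mem_prod ?_ ?_⟩
        · simp only [Set.mem_Icc]; constructor <;> linarith
        · simp only [Set.mem_Icc]; constructor <;> linarith
      obtain ⟨p₀, hp₀mem, hp₀max⟩ := hKcomp.exists_isMaxOn hKne hψC2.continuous.continuousOn
      obtain ⟨x₀, y₀⟩ := p₀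
      have hy₀ : y₀ ∈ Set.Icc (-L) (0:ℝ) := hp₀mem.2
      have hxw_in : (xw, yw) ∈ Kc := by
        by_contra hc
        have hxw : ¬ (xw ∈ Set.Icc (-X') X') := fun hx => hc (Set.mk_mem_prod hx hyw)
        rw [Set.mem_Icc, not_and_or] at hxw
        have habs : X ≤ |xw| := by
          rcases hxw with hx | hx <;> push_neg at hx
          · calc X ≤ X' := le_max_left _ _
              _ ≤ -xw := by linarith
              _ ≤ |xw| := neg_le_abs _
          · calc X ≤ X' := le_max_left _ _
              _ ≤ xw := hx.le
              _ ≤ |xw| := le_abs_self _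
        have := hX xw habs yw hyw
        have := le_abs_self (ψ xw yw)
        linarith
      have hwle : ψ xw yw ≤ ψ x₀ y₀ := hp₀max hxw_in
      have hglobal : ∀ x : ℝ, ∀ y ∈ Set.Icc (-L) (0:ℝ), ψ x y ≤ ψ x₀ y₀ := by
        intro x y hy
        by_cases hx : x ∈ Set.Icc (-X') X'
        · exact hp₀max (Set.mk_mem_prod hx hy)
        · rw [Set.mem_Icc, not_and_or] at hx
          have habs : X ≤ |x| := by
            rcases hx with hx | hx <;> push_neg at hx
            · calc X ≤ X' := le_max_left _ _
                _ ≤ -x := by linarith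
                _ ≤ |x| := neg_le_abs _
            · calc X ≤ X' := le_max_left _ _
                _ ≤ x := hx.le
                _ ≤ |x| := le_abs_self _
          have h3 := hX x habs y hy
          have := le_abs_self (ψ x y)
          linarith
      have hψS : ψ x₀ y₀ = S :=
        le_antisymm (hψleS x₀ y₀ hy₀)
          (csSup_le hRne (by rintro z ⟨x, y, hy, rfl⟩; exact hglobal x y hy))
      -- x-direction derivatives
      set Ψ : ℝ × ℝ → ℝ := fun p => ψ p.1 p.2 with hΨdef
      have hfx : ContDiff ℝ 2 (fun x' => ψ x' y₀) :=
        hψC2.comp (contDiff_id.prodMk contDiff_const)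
      have hfxmax : ∀ x, ψ x y₀ ≤ ψ x₀ y₀ := fun x => hglobal x y₀ hy₀
      have hderivx0 : deriv (fun x' => ψ x' y₀) x₀ = 0 := by
        have : IsLocalMax (fun x' => ψ x' y₀) x₀ := Filter.Eventually.of_forall hfxmax
        exact this.deriv_eq_zero
      have hd2x : deriv (deriv (fun x' => ψ x' y₀)) x₀ ≤ 0 :=
        second_deriv_nonpos_of_max (b := x₀ + 1) (by linarith) hfx (fun y _ => hfxmax y) hderivx0
      -- y-slice
      set fy : ℝ → ℝ := fun y' => ψ x₀ y' with hfydef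
      have hfyC2 : ContDiff ℝ 2 fy := hψC2.comp (contDiff_const.prodMk contDiff_id)
      have hfymax : ∀ y ∈ Set.Icc (-L) (0:ℝ), fy y ≤ ψ x₀ y₀ := fun y hy => hglobal x₀ y hy
      rcases eq_or_lt_of_le hy₀.2 with hy0 | hy0
      · -- max at the road y₀ = 0
        subst hy0
        refine le_trans ?_ (le_max_right _ _)
        have hdnn : 0 ≤ deriv fy 0 := by
          refine deriv_nonneg_of_max_right (a := -L) (by linarith)
            ((hfyC2.differentiable (by norm_num)) 0) ?_
          intro y hy
          exact hfymax y hy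
        have hrob := hRobin x₀
        have h5 : 0 ≤ μ * φ x₀ - ψ x₀ 0 := by
          rw [← hrob]; positivity
        have hφT : φ x₀ ≤ max T 0 := le_trans (hφleT x₀) (le_max_left _ _)
        rw [← hψS]
        nlinarith
      · -- max in the interior or at the bottom: use the PDE
        refine le_trans ?_ (le_max_left _ _)
        -- first derivative in y vanishes
        have hderivy0 : deriv fy y₀ = 0 := by
          rcases eq_or_lt_of_le hy₀.1 with hyL | hyL
          · rw [← hyL]; exact hNeu x₀
          · have : IsLocalMax fy y₀ := by
              have hnb : Set.Ioo (-L) (0:ℝ) ∈ 𝓝 y₀ := isOpen_Ioo.mem_nhds ⟨hyL, hy0⟩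
              filter_upwards [hnb] with y hy
              exact hfymax y ⟨hy.1.le, hy.2.le⟩
            exact this.deriv_eq_zero
        have hd2y : deriv (deriv fy) y₀ ≤ 0 := by
          refine second_deriv_nonpos_of_max (b := y₀ / 2) (by linarith) hfyC2 ?_ hderivy0
          intro y hy
          refine hfymax y ⟨le_trans hy₀.1 hy.1, le_trans hy.2 (by linarith)⟩
        -- extend the PDE to y₀ by continuity
        have hpde₀ : -d * (deriv (deriv (fun x' => ψ x' y₀)) x₀ + deriv (deriv fy) y₀)
            + (c₀ - 2 * d * r) * deriv (fun x' => ψ x' y₀) x₀ + γ x₀ * ψ x₀ y₀ = h x₀ := by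
          have e1 : ∀ y : ℝ, deriv (deriv (fun x' => ψ x' y)) x₀
              = fderiv ℝ (fun p => fderiv ℝ Ψ p (1, 0)) (x₀, y) (1, 0) :=
            fun y => slice_xx hψC2 x₀ y
          have e3 : ∀ y : ℝ, deriv (fun x' => ψ x' y) x₀ = fderiv ℝ Ψ (x₀, y) (1, 0) :=
            fun y => slice_x_eq hψC2 x₀ y
          have c1 : Continuous (fun y : ℝ => fderiv ℝ (fun p => fderiv ℝ Ψ p (1, 0)) (x₀, y) (1, 0)) :=
            (cont_slice_xx hψC2).comp (continuous_const.prodMk continuous_id)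
          have c2 : Continuous (deriv (deriv fy)) := by
            have h1 : ContDiff ℝ 1 (deriv fy) :=
              (contDiff_succ_iff_deriv.1 (by norm_num at hfyC2 ⊢; exact hfyC2)).2.2
            exact (contDiff_one_iff_deriv.1 h1).2
          have c3 : Continuous (fun y : ℝ => fderiv ℝ Ψ (x₀, y) (1, 0)) :=
            ((contDiff_Dv (n := 1) ((1:ℝ), (0:ℝ)) (by norm_num at hψC2 ⊢; exact hψC2)).continuous).comp
              (continuous_const.prodMk continuous_id)
          have c4 : Continuous fy := hfyC2.continuous
          have hFcont : Continuous (fun y : ℝ =>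
              -d * (fderiv ℝ (fun p => fderiv ℝ Ψ p (1, 0)) (x₀, y) (1, 0) + deriv (deriv fy) y)
                + (c₀ - 2 * d * r) * fderiv ℝ Ψ (x₀, y) (1, 0) + γ x₀ * fy y) :=
            ((continuous_const.mul (c1.add c2)).add (continuous_const.mul c3)).add
              (continuous_const.mul c4)
          have hclosed : IsClosed {y : ℝ |
              -d * (fderiv ℝ (fun p => fderiv ℝ Ψ p (1, 0)) (x₀, y) (1, 0) + deriv (deriv fy) y)
                + (c₀ - 2 * d * r) * fderiv ℝ Ψ (x₀, y) (1, 0) + γ x₀ * fy y = h x₀} :=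
            isClosed_eq hFcont continuous_const
          have hsub : Set.Ioo (-L) (0:ℝ) ⊆ {y : ℝ |
              -d * (fderiv ℝ (fun p => fderiv ℝ Ψ p (1, 0)) (x₀, y) (1, 0) + deriv (deriv fy) y)
                + (c₀ - 2 * d * r) * fderiv ℝ Ψ (x₀, y) (1, 0) + γ x₀ * fy y = h x₀} := by
            intro y hy
            have hp := hpde x₀ y hy
            rw [Set.mem_setOf_eq, ← e1 y, ← e3 y]
            exact hp
          have hicc : Set.Icc (-L) (0:ℝ) ⊆ {y : ℝ |
              -d * (fderiv ℝ (fun p => fderiv ℝ Ψ p (1, 0)) (x₀, y) (1, 0) + deriv (deriv fy) y)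
                + (c₀ - 2 * d * r) * fderiv ℝ Ψ (x₀, y) (1, 0) + γ x₀ * fy y = h x₀} := by
            rw [← closure_Ioo (show (-L : ℝ) ≠ 0 by linarith)]
            exact closure_minimal hsub hclosed
          have hkey := hicc hy₀
          rw [Set.mem_setOf_eq] at hkey
          rw [e1 y₀, e3 y₀]
          exact hkey
        rw [hderivx0, hψS] at hpde₀
        have hhx : h x₀ ≤ Mh := (le_abs_self _).trans (hhb x₀)
        have hγx := hγ x₀
        have hγS : γ₀ * S ≤ γ x₀ * S := by nlinarith
        have h6 : γ x₀ * S ≤ Mh := by nlinarith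
        have h7 : γ₀ * S ≤ Mh := le_trans hγS h6
        rw [one_div, inv_mul_eq_div, le_div_iff₀ hγ₀]
        nlinarith
  -- combine the two claims
  clear_value S T
  clear hψlim hpde hRs hSdef hTdef hRbdd hRne hTbdd
  have hμα : (0:ℝ) < μ + α := by linarith
  have hmaxS : max S 0 ≤ (1/γ₀)*Mh + (μ/α)*Mg := by
    rcases le_max_iff.1 claim2 with hcase | hcase
    · have : 0 ≤ (μ/α)*Mg := by positivity
      linarith
    · have h1 : α * max S 0 ≤ μ * Mg := by
        nlinarith [mul_le_mul_of_nonneg_left claim1 hμ.le,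
          mul_le_mul_of_nonneg_left hcase hμα.le]
      have h2 : max S 0 ≤ μ/α * Mg := by
        rw [div_mul_eq_mul_div, le_div_iff₀ hα]
        nlinarith
      have : 0 ≤ 1/γ₀*Mh := by positivity
      linarith
  have hK'eq : ((1/(γ₀*(μ+α)))*Mh + (1/α)*Mg) * (μ+α) = Mg + ((1/γ₀)*Mh + (μ/α)*Mg) := by
    field_simp
    ring
  have hmaxT : max T 0 ≤ (1/(γ₀*(μ+α)))*Mh + (1/α)*Mg := by
    have h2 : (μ+α) * max T 0 ≤ Mg + ((1/γ₀)*Mh + (μ/α)*Mg) := le_trans claim1 (by linarith)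
    rw [← hK'eq] at h2
    exact le_of_mul_le_mul_left (by nlinarith) hμα
  constructor
  · intro x y hy
    exact le_trans (hψleS x y hy) (le_trans (le_max_left S 0) hmaxS)
  · intro x
    exact le_trans (hφleT x) (le_trans (le_max_left T 0) hmaxT)



theorem conjugated_system_apriori_estimate (d D μ c₀ r L γ₀ : ℝ)
    (hd : 0 < d) (hD : 0 < D) (hμ : 0 < μ) (hc₀ : 0 < c₀) (hr : 0 < r) (hL : 0 < L)
    (hγ₀ : 0 < γ₀)
    (hαr : 0 < -D * r ^ 2 + c₀ * r)
    (γ : ℝ → ℝ) (hγc : Continuous γ) (hγ : ∀ x, γ₀ ≤ γ x)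
    (φ : ℝ → ℝ) (ψ : ℝ → ℝ → ℝ) (g h : ℝ → ℝ) (Mg Mh : ℝ)
    (hφC2 : ContDiff ℝ 2 φ) (hψC2 : ContDiff ℝ 2 (fun p : ℝ × ℝ => ψ p.1 p.2))
    (hφb : ∃ M : ℝ, ∀ x, |φ x| ≤ M) (hψb : ∃ M : ℝ, ∀ x y, |ψ x y| ≤ M)
    (hgb : ∀ x, |g x| ≤ Mg) (hhb : ∀ x, |h x| ≤ Mh)
    (hroad : ∀ x : ℝ, -D * deriv (deriv φ) x + (c₀ - 2 * D * r) * deriv φ x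
      + (μ + (-D * r ^ 2 + c₀ * r)) * φ x - ψ x 0 = g x)
    (hpde : ∀ x : ℝ, ∀ y ∈ Set.Ioo (-L) (0 : ℝ),
      -d * (deriv (deriv (fun x' => ψ x' y)) x + deriv (deriv (fun y' => ψ x y')) y)
        + (c₀ - 2 * d * r) * deriv (fun x' => ψ x' y) x + γ x * ψ x y = h x)
    (hRobin : ∀ x : ℝ, d * deriv (fun y' => ψ x y') 0 = μ * φ x - ψ x 0)
    (hNeu : ∀ x : ℝ, deriv (fun y' => ψ x y') (-L) = 0)
    (hφlim : Filter.Tendsto φ Filter.atBot (nhds 0) ∧ Filter.Tendsto φ Filter.atTop (nhds 0))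
    (hψlim : ∀ ε > 0, ∃ X : ℝ, ∀ x : ℝ, X ≤ |x| → ∀ y ∈ Set.Icc (-L) 0, |ψ x y| < ε) :
    (∀ x : ℝ, ∀ y ∈ Set.Icc (-L) (0 : ℝ),
      |ψ x y| ≤ (1 / γ₀) * Mh + (μ / (-D * r ^ 2 + c₀ * r)) * Mg) ∧
    (∀ x : ℝ, |φ x| ≤ (1 / (γ₀ * (μ + (-D * r ^ 2 + c₀ * r)))) * Mh
      + (1 / (-D * r ^ 2 + c₀ * r)) * Mg) := by
  set α := -D * r ^ 2 + c₀ * r with hα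
  have haux1 := aux_upper d D μ c₀ r L γ₀ α hd hD hμ hL hγ₀ hαr γ hγ φ ψ g h Mg Mh
    hφC2 hψC2 hφb hψb hgb hhb hroad hpde hRobin hNeu hφlim hψlim
  have haux2 := aux_upper d D μ c₀ r L γ₀ α hd hD hμ hL hγ₀ hαr γ hγ
    (fun x => -φ x) (fun x y => -ψ x y) (fun x => -g x) (fun x => -h x) Mg Mh
    hφC2.neg hψC2.neg
    (by obtain ⟨M, hM⟩ := hφb; exact ⟨M, fun x => by simpa [abs_neg] using hM x⟩)
    (by obtain ⟨M, hM⟩ := hψb; exact ⟨M, fun x y => by simpa [abs_neg] using hM x y⟩)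
    (fun x => by simpa [abs_neg] using hgb x)
    (fun x => by simpa [abs_neg] using hhb x)
    (by intro x; simp only [deriv.fun_neg']; have := hroad x; ring_nf at this ⊢; linarith)
    (by intro x y hy; simp only [deriv.fun_neg']; have := hpde x y hy; ring_nf at this ⊢; linarith)
    (by intro x; simp only [deriv.fun_neg']; have := hRobin x; ring_nf at this ⊢; linarith)
    (by intro x; simp only [deriv.fun_neg']; have := hNeu x; ring_nf at this ⊢; linarith)
    ⟨by simpa using hφlim.1.neg, by simpa using hφlim.2.neg⟩
    (by intro ε hε; obtain ⟨X, hX⟩ := hψlim ε hε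
        exact ⟨X, fun x hx y hy => by simpa [abs_neg] using hX x hx y hy⟩)
  constructor
  · intro x y hy
    refine abs_le.2 ⟨?_, haux1.1 x y hy⟩
    have := haux2.1 x y hy
    linarith
  · intro x
    refine abs_le.2 ⟨?_, haux1.2 x⟩
    have := haux2.2 x
    linarith
end
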